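/- arXiv:1709.04104 — 2 statements merged into one kernel-verified Lean document; each statement's English description precedes it below -/
import Mathlib

section
/- For all real b, c > -1, it holds that f(b,c) = ((c+1)/(b+1)) · f(b/2, c/2) · f((c+1)/2, (b+1)/2). -/
open Filter Finset Topology

/-- The Thue–Morse sequence with values `±1`: `u n = (-1)^(s₂ n)` where `s₂ n`
is the sum of the binary digits of `n`. -/
def u (n : ℕ) : ℤ := (-1) ^ (Nat.digits 2 n).sum


lemma u_even (n : ℕ) : u (2 * n) = u n := by
  rcases Nat.eq_zero_or_pos n with h | h
  · subst h; rfl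
  · unfold u
    rw [Nat.digits_def' (by norm_num : 1 < 2) (by omega : 0 < 2 * n)]
    simp [Nat.mul_mod_right, Nat.mul_div_cancel_left _ (by norm_num : 0 < 2)]

lemma u_odd (n : ℕ) : u (2 * n + 1) = -u n := by
  unfold u
  rw [Nat.digits_def' (by norm_num : 1 < 2) (by omega : 0 < 2 * n + 1)]
  have : (2 * n + 1) % 2 = 1 := by omega
  have h2 : (2 * n + 1) / 2 = n := by omega
  rw [this, h2]
  rw [List.sum_cons, pow_add]; ring

lemma prod_split (b c : ℝ) (N : ℕ) :
    ∏ n ∈ Finset.Icc 1 (2 * N + 1), (((n : ℝ) + b) / ((n : ℝ) + c)) ^ (u n)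
    = ((c + 1) / (b + 1)) *
      (∏ n ∈ Finset.Icc 1 N, (((n : ℝ) + b / 2) / ((n : ℝ) + c / 2)) ^ (u n)) *
      (∏ n ∈ Finset.Icc 1 N, (((n : ℝ) + (c + 1) / 2) / ((n : ℝ) + (b + 1) / 2)) ^ (u n)) := by
  induction N with
  | zero =>
      have hu1 : u 1 = -1 := by simp [u]
      have hempty : Finset.Icc 1 0 = (∅ : Finset ℕ) := Finset.Icc_eq_empty (by omega)
      simp only [Nat.mul_zero, Nat.zero_add, Finset.Icc_self, Finset.prod_singleton, hu1,
        hempty, Finset.prod_empty, mul_one]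
      push_cast
      rw [zpow_neg, zpow_one, inv_div]
      ring
  | succ N ih =>
      have h1 : 2 * (N + 1) + 1 = (2 * N + 1) + 1 + 1 := by ring
      rw [h1, Finset.prod_Icc_succ_top (by omega), Finset.prod_Icc_succ_top (by omega),
        Finset.prod_Icc_succ_top (by omega : 1 ≤ N + 1),
        Finset.prod_Icc_succ_top (by omega : 1 ≤ N + 1), ih]
      have he : (2 * N + 1 + 1) = 2 * (N + 1) := by ring
      rw [he, u_even, u_odd]
      have e1 : ((2 * (N + 1) : ℕ) : ℝ) + b = 2 * (((N + 1 : ℕ) : ℝ) + b / 2) := by push_cast; ring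
      have e2 : ((2 * (N + 1) : ℕ) : ℝ) + c = 2 * (((N + 1 : ℕ) : ℝ) + c / 2) := by push_cast; ring
      have e3 : ((2 * (N + 1) + 1 : ℕ) : ℝ) + b = 2 * (((N + 1 : ℕ) : ℝ) + (b + 1) / 2) := by push_cast; ring
      have e4 : ((2 * (N + 1) + 1 : ℕ) : ℝ) + c = 2 * (((N + 1 : ℕ) : ℝ) + (c + 1) / 2) := by push_cast; ring
      rw [e1, e2, e3, e4, mul_div_mul_left _ _ (two_ne_zero), mul_div_mul_left _ _ (two_ne_zero),
        zpow_neg, ← inv_zpow, inv_div]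
      ring

/-- If `f b c` is, for `b, c > -1`, the (positive) limit of the partial products
`∏_{n=1}^{N} ((n+b)/(n+c))^{u_n}`, then
`f(b,c) = ((c+1)/(b+1)) · f(b/2, c/2) · f((c+1)/2, (b+1)/2)`. -/
theorem stmt_4 (f : ℝ → ℝ → ℝ)
    (hf : ∀ b c : ℝ, -1 < b → -1 < c →
      Tendsto (fun N : ℕ => ∏ n ∈ Finset.Icc 1 N,
        (((n : ℝ) + b) / ((n : ℝ) + c)) ^ (u n)) atTop (𝓝 (f b c)))
    (hfpos : ∀ b c : ℝ, -1 < b → -1 < c → 0 < f b c) :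
    ∀ b c : ℝ, -1 < b → -1 < c →
      f b c = ((c + 1) / (b + 1)) * f (b / 2) (c / 2) * f ((c + 1) / 2) ((b + 1) / 2) := by
  intro b c hb hc
  have h21 : Tendsto (fun N : ℕ => 2 * N + 1) atTop atTop :=
    tendsto_atTop_atTop.mpr fun m => ⟨m, fun n hn => by omega⟩
  have hL1 : Tendsto (fun N : ℕ => ∏ n ∈ Finset.Icc 1 (2 * N + 1),
      (((n : ℝ) + b) / ((n : ℝ) + c)) ^ (u n)) atTop (𝓝 (f b c)) :=
    (hf b c hb hc).comp h21
  have hA := hf (b / 2) (c / 2) (by linarith) (by linarith)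
  have hB := hf ((c + 1) / 2) ((b + 1) / 2) (by linarith) (by linarith)
  have hL2 : Tendsto (fun N : ℕ => ∏ n ∈ Finset.Icc 1 (2 * N + 1),
      (((n : ℝ) + b) / ((n : ℝ) + c)) ^ (u n)) atTop
      (𝓝 (((c + 1) / (b + 1)) * f (b / 2) (c / 2) * f ((c + 1) / 2) ((b + 1) / 2))) := by
    have := (((tendsto_const_nhds (x := ((c + 1) / (b + 1) : ℝ)) (f := (atTop : Filter ℕ))).mul hA).mul hB)
    refine this.congr fun N => ?_
    exact (prod_split b c N).symm
  exact tendsto_nhds_unique hL1 hL2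
end

section
/- For all real numbers -1 < b < c, it holds that 1 < f(b,c) < ((c+1)/(b+1))². -/
open Filter Finset Topology

lemma u_zero : u 0 = 1 := by simp [u]
lemma u_one : u 1 = -1 := by simp [u]
lemma u_two : u 2 = -1 := by simp [u]

lemma u_two_mul (k : ℕ) (hk : k ≠ 0) : u (2*k) = u k := by
  unfold u
  rw [Nat.digits_def' (by norm_num : 1 < 2) (by positivity)]
  simp [Nat.mul_div_cancel_left, Nat.mul_mod_right]

lemma u_two_mul_add_one (k : ℕ) : u (2*k+1) = - u k := by
  unfold u
  rw [Nat.digits_def' (by norm_num : 1 < 2) (by positivity)]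
  simp [Nat.mul_add_mod, Nat.mul_add_div, pow_add]

lemma u_pair (k : ℕ) : u (2*k) + u (2*k+1) = 0 := by
  rcases Nat.eq_zero_or_pos k with h | h
  · subst h; simp [u_zero, u_one]
  · rw [u_two_mul k h.ne', u_two_mul_add_one]; ring

lemma u_pm (n : ℕ) : u n = 1 ∨ u n = -1 := by
  unfold u
  rcases Nat.even_or_odd (Nat.digits 2 n).sum with h | h
  · left; exact h.neg_one_pow
  · right; exact h.neg_one_pow

lemma T_even (M : ℕ) : ∑ k ∈ Finset.range (2*M), u k = 0 := by
  induction M with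
  | zero => simp
  | succ M ih =>
    have h2 : 2*(M+1) = 2*M + 1 + 1 := by ring
    rw [h2, Finset.sum_range_succ, Finset.sum_range_succ, ih, zero_add, u_pair]

lemma T_bound (X : ℕ) : -1 ≤ ∑ k ∈ Finset.range X, u k ∧ ∑ k ∈ Finset.range X, u k ≤ 1 := by
  rcases Nat.even_or_odd X with ⟨M, hM⟩ | ⟨M, hM⟩
  · have : X = 2*M := by omega
    rw [this, T_even]; norm_num
  · have : X = 2*M + 1 := by omega
    rw [this, Finset.sum_range_succ, T_even, zero_add]
    rcases u_pm (2*M) with h | h <;> simp [h]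

lemma S_bound (N : ℕ) : -2 ≤ ∑ k ∈ Finset.Icc 1 N, u k ∧ ∑ k ∈ Finset.Icc 1 N, u k ≤ 0 := by
  have hsplit : ∑ k ∈ Finset.range (N+1), u k = u 0 + ∑ k ∈ Finset.Icc 1 N, u k := by
    rw [Finset.range_eq_Ico, ← Finset.sum_Ico_consecutive _ (Nat.zero_le 1) (by omega)]
    simp [Finset.Ico_add_one_right_eq_Icc]
  have := T_bound (N+1)
  rw [hsplit, u_zero] at this
  omega

lemma S_two : ∑ k ∈ Finset.Icc 1 2, u k = -2 := by
  have : Finset.Icc 1 2 = {1, 2} := by decide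
  rw [this]; simp [u_one, u_two]

/-- If `f b c` is, for `b, c > -1`, the (positive) limit of the partial products
`∏_{n=1}^{N} ((n+b)/(n+c))^{u_n}`, then for `-1 < b < c` one has
`1 < f(b,c) < ((c+1)/(b+1))²`. -/
theorem stmt_8 (f : ℝ → ℝ → ℝ)
    (hf : ∀ b c : ℝ, -1 < b → -1 < c →
      Tendsto (fun N : ℕ => ∏ n ∈ Finset.Icc 1 N,
        (((n : ℝ) + b) / ((n : ℝ) + c)) ^ (u n)) atTop (𝓝 (f b c)))
    (hfpos : ∀ b c : ℝ, -1 < b → -1 < c → 0 < f b c) :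
    ∀ b c : ℝ, -1 < b → b < c →
      1 < f b c ∧ f b c < ((c + 1) / (b + 1)) ^ 2 := by
  intro b c hb hbc
  have hc : -1 < c := hb.trans hbc
  set q : ℕ → ℝ := fun n => ((n : ℝ) + b) / ((n : ℝ) + c) with hqdef
  have hnb : ∀ n : ℕ, 1 ≤ n → 0 < (n : ℝ) + b := by
    intro n hn
    have : (1 : ℝ) ≤ (n : ℝ) := by exact_mod_cast hn
    linarith
  have hnc : ∀ n : ℕ, 1 ≤ n → 0 < (n : ℝ) + c := by
    intro n hn
    have : (1 : ℝ) ≤ (n : ℝ) := by exact_mod_cast hn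
    linarith
  have hqpos : ∀ n : ℕ, 1 ≤ n → 0 < q n := fun n hn => div_pos (hnb n hn) (hnc n hn)
  have hqlt1 : ∀ n : ℕ, 1 ≤ n → q n < 1 := by
    intro n hn
    rw [hqdef]
    exact (div_lt_one (hnc n hn)).2 (by linarith)
  have hqmono : ∀ n : ℕ, 1 ≤ n → q n < q (n + 1) := by
    intro n hn
    rw [hqdef]
    simp only
    rw [div_lt_div_iff₀ (hnc n hn) (by push_cast; have := hnc n hn; linarith)]
    push_cast
    nlinarith [hnc n hn]
  -- positivity of partial products
  have hPpos : ∀ N : ℕ, 0 < ∏ n ∈ Finset.Icc 1 N, q n ^ u n := by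
    intro N
    apply Finset.prod_pos
    intro n hn
    exact zpow_pos (hqpos n (Finset.mem_Icc.1 hn).1) _
  -- zpow bounds for bases in (0,1]
  have hzpow : ∀ t : ℝ, 0 < t → t ≤ 1 → ∀ s : ℤ, -2 ≤ s → s ≤ 0 →
      1 ≤ t ^ s ∧ t ^ s ≤ (1 / t) ^ 2 := by
    intro t ht ht1 s hs1 hs2
    have hti : 1 ≤ t⁻¹ := (one_le_inv₀ ht).2 ht1
    have e2 : t ^ (-2 : ℤ) = (t ^ 2)⁻¹ := by
      rw [zpow_neg]; norm_cast
    have e1 : t ^ (-1 : ℤ) = t⁻¹ := zpow_neg_one t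
    have epow : (1 / t) ^ 2 = (t ^ 2)⁻¹ := by rw [one_div, inv_pow]
    interval_cases s
    · refine ⟨?_, ?_⟩
      · rw [e2]
        have h2 : t ^ 2 ≤ 1 := by nlinarith
        exact (one_le_inv₀ (by positivity)).2 h2
      · rw [e2, epow]
    · refine ⟨?_, ?_⟩
      · rw [e1]; exact hti
      · rw [e1, epow]
        exact (inv_le_inv₀ ht (by positivity)).2 (by nlinarith)
    · refine ⟨by simp, ?_⟩
      rw [zpow_zero, epow]
      exact (one_le_inv₀ (by positivity)).2 (by nlinarith)
  have hq1 : 0 < q 1 := hqpos 1 le_rfl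
  have hq2 : 0 < q 2 := hqpos 2 one_le_two
  -- key double bound on renormalized partial products
  have key : ∀ N : ℕ, 2 ≤ N →
      q 2 / q 1 ≤ (∏ n ∈ Finset.Icc 1 N, q n ^ u n) * q N ^ (-(∑ k ∈ Finset.Icc 1 N, u k)) ∧
      (∏ n ∈ Finset.Icc 1 N, q n ^ u n) * q N ^ (-(∑ k ∈ Finset.Icc 1 N, u k)) ≤
        (q 1 / q 2) * (q N / q 1) ^ 2 := by
    intro N hN
    induction N, hN using Nat.le_induction with
    | base =>
      have hI : Finset.Icc 1 2 = ({1, 2} : Finset ℕ) := by decide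
      have hprod : (∏ n ∈ Finset.Icc 1 2, q n ^ u n) = q 1 ^ u 1 * q 2 ^ u 2 := by
        rw [hI]; simp
      have hval : (∏ n ∈ Finset.Icc 1 2, q n ^ u n) * q 2 ^ (-(∑ k ∈ Finset.Icc 1 2, u k))
          = q 2 / q 1 := by
        rw [hprod, S_two, u_one, u_two]
        norm_num [zpow_neg_one]
        field_simp
      rw [hval]
      refine ⟨le_refl _, le_of_eq ?_⟩
      field_simp
    | succ N hN ih =>
      have hN1 : 1 ≤ N := by omega
      have hqN : 0 < q N := hqpos N hN1
      have hqN1 : 0 < q (N + 1) := hqpos (N + 1) (by omega)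
      have hprod : (∏ n ∈ Finset.Icc 1 (N + 1), q n ^ u n)
          = (∏ n ∈ Finset.Icc 1 N, q n ^ u n) * q (N + 1) ^ u (N + 1) :=
        Finset.prod_Icc_succ_top (by omega) _
      have hsum : (∑ k ∈ Finset.Icc 1 (N + 1), u k)
          = (∑ k ∈ Finset.Icc 1 N, u k) + u (N + 1) :=
        Finset.sum_Icc_succ_top (by omega) _
      set s : ℤ := ∑ k ∈ Finset.Icc 1 N, u k with hs
      set PN : ℝ := ∏ n ∈ Finset.Icc 1 N, q n ^ u n with hPN
      have hPNpos : 0 < PN := hPpos N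
      have h1 : q (N+1) ^ u (N+1) * q (N+1) ^ (-(s + u (N+1))) = (q (N+1) ^ s)⁻¹ := by
        rw [← zpow_add₀ hqN1.ne', show u (N+1) + -(s + u (N+1)) = -s by ring, zpow_neg]
      have hRrec : (∏ n ∈ Finset.Icc 1 (N + 1), q n ^ u n)
            * q (N + 1) ^ (-(∑ k ∈ Finset.Icc 1 (N + 1), u k))
          = (PN * q N ^ (-s)) * (q N / q (N + 1)) ^ s := by
        have h3 : (q N / q (N + 1)) ^ s = q N ^ s / q (N + 1) ^ s := div_zpow _ _ _
        have h4 : q N ^ (-s) = (q N ^ s)⁻¹ := zpow_neg _ _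
        have hne : (q N : ℝ) ^ s ≠ 0 := zpow_ne_zero _ hqN.ne'
        have h2 : (q N ^ s)⁻¹ * (q N ^ s / q (N + 1) ^ s) = (q (N + 1) ^ s)⁻¹ := by
          rw [← mul_div_assoc, inv_mul_cancel₀ hne, one_div]
        rw [hprod, hsum, mul_assoc, h1, h3, h4, mul_assoc, h2]
      obtain ⟨hs1, hs2⟩ := S_bound N
      rw [← hs] at hs1 hs2
      have ht : 0 < q N / q (N + 1) := div_pos hqN hqN1
      have ht1 : q N / q (N + 1) ≤ 1 := le_of_lt ((div_lt_one hqN1).2 (hqmono N hN1))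
      obtain ⟨hx1, hx2⟩ := hzpow _ ht ht1 s hs1 hs2
      have hRpos : 0 < PN * q N ^ (-s) := mul_pos hPNpos (zpow_pos hqN _)
      have h1d : (1 / (q N / q (N + 1))) ^ 2 = (q (N + 1) / q N) ^ 2 := by
        rw [one_div_div]
      rw [h1d] at hx2
      constructor
      · rw [hRrec]
        calc q 2 / q 1 ≤ PN * q N ^ (-s) := ih.1
          _ = (PN * q N ^ (-s)) * 1 := (mul_one _).symm
          _ ≤ (PN * q N ^ (-s)) * (q N / q (N + 1)) ^ s :=
              mul_le_mul_of_nonneg_left hx1 hRpos.le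
      · rw [hRrec]
        calc (PN * q N ^ (-s)) * (q N / q (N + 1)) ^ s
            ≤ ((q 1 / q 2) * (q N / q 1) ^ 2) * ((q (N + 1) / q N) ^ 2) :=
              mul_le_mul ih.2 hx2 (by positivity) (by positivity)
          _ = (q 1 / q 2) * (q (N + 1) / q 1) ^ 2 := by
              field_simp
  -- bounds on the partial products themselves
  have keyP : ∀ N : ℕ, 2 ≤ N →
      q 2 / q 1 ≤ (∏ n ∈ Finset.Icc 1 N, q n ^ u n) ∧
      (∏ n ∈ Finset.Icc 1 N, q n ^ u n) ≤ (q 1 / q 2) * (1 / q 1 ^ 2) := by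
    intro N hN
    obtain ⟨hk1, hk2⟩ := key N hN
    have hN1 : 1 ≤ N := by omega
    have hqN : 0 < q N := hqpos N hN1
    obtain ⟨hs1, hs2⟩ := S_bound N
    set s : ℤ := ∑ k ∈ Finset.Icc 1 N, u k with hs
    set PN : ℝ := ∏ n ∈ Finset.Icc 1 N, q n ^ u n with hPN
    have hPNpos : 0 < PN := hPpos N
    obtain ⟨hy1, hy2⟩ := hzpow (q N) hqN (le_of_lt (hqlt1 N hN1)) s hs1 hs2
    have hRpos : 0 < PN * q N ^ (-s) := mul_pos hPNpos (zpow_pos hqN _)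
    have hsplit : PN = (PN * q N ^ (-s)) * q N ^ s := by
      rw [mul_assoc, ← zpow_add₀ hqN.ne', neg_add_cancel, zpow_zero, mul_one]
    constructor
    · rw [hsplit]
      calc q 2 / q 1 = (q 2 / q 1) * 1 := (mul_one _).symm
        _ ≤ (PN * q N ^ (-s)) * q N ^ s :=
            mul_le_mul hk1 hy1 zero_le_one hRpos.le
    · rw [hsplit]
      have halg : ∀ x y z : ℝ, x ≠ 0 → y ≠ 0 → z ≠ 0 →
          ((x / y) * (z / x) ^ 2) * ((1 / z) ^ 2) = (x / y) * (1 / x ^ 2) := by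
        intro x y z hx hy hz
        field_simp
      calc (PN * q N ^ (-s)) * q N ^ s
          ≤ ((q 1 / q 2) * (q N / q 1) ^ 2) * ((1 / q N) ^ 2) :=
            mul_le_mul hk2 hy2 (by positivity) (by positivity)
        _ = (q 1 / q 2) * (1 / q 1 ^ 2) := halg _ _ _ hq1.ne' hq2.ne' hqN.ne'
  -- pass to the limit
  have hlim : Tendsto (fun N : ℕ => ∏ n ∈ Finset.Icc 1 N, q n ^ u n) atTop (𝓝 (f b c)) :=
    hf b c hb hc
  have hlow : q 2 / q 1 ≤ f b c :=
    ge_of_tendsto hlim (Filter.eventually_atTop.2 ⟨2, fun N hN => (keyP N hN).1⟩)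
  have hup : f b c ≤ (q 1 / q 2) * (1 / q 1 ^ 2) :=
    le_of_tendsto hlim (Filter.eventually_atTop.2 ⟨2, fun N hN => (keyP N hN).2⟩)
  have hq12 : q 1 < q 2 := hqmono 1 le_rfl
  constructor
  · have h1 : 1 < q 2 / q 1 := (one_lt_div hq1).2 hq12
    linarith
  · have hlt : (q 1 / q 2) * (1 / q 1 ^ 2) < 1 * (1 / q 1 ^ 2) :=
      mul_lt_mul_of_pos_right ((div_lt_one hq2).2 hq12) (by positivity)
    have hb1 : (0:ℝ) < 1 + b := by linarith
    have hc1 : (0:ℝ) < 1 + c := by linarith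
    have hfin : (1 : ℝ) * (1 / q 1 ^ 2) = ((c + 1) / (b + 1)) ^ 2 := by
      have hq1v : q 1 = (1 + b) / (1 + c) := by rw [hqdef]; norm_num
      rw [hq1v, one_mul, div_pow, one_div_div, div_pow]
      ring_nf
    rw [hfin] at hlt
    linarith
end
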